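/- arXiv:1001.0521 — 5 statements merged into one kernel-verified Lean document; each statement's English description precedes it below -/
import Mathlib

section
/- Let G be a nonempty compact Hausdorff space equipped with a continuous associative multiplication satisfying both cancellation laws: s·t = s'·t implies s = s', and s·t = s·t' implies t = t', for all s, s', t, t' ∈ G. Then G is a topological group: there exists an identity element e ∈ G with e·g = g·e = g for all g, every g ∈ G has a two-sided inverse, and the inversion map g ↦ g⁻¹ is continuous. -/
/-- A nonempty compact Hausdorff space with a continuous associative multiplication
satisfying both cancellation laws is a topological group: there is an identity element,
every element has a two-sided inverse, and the inversion map is continuous. -/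
theorem stmt_4 {G : Type*} [TopologicalSpace G] [CompactSpace G] [T2Space G] [Nonempty G]
    (mul : G → G → G) (hcont : Continuous fun p : G × G => mul p.1 p.2)
    (hassoc : ∀ a b c : G, mul (mul a b) c = mul a (mul b c))
    (hlcancel : ∀ s s' t : G, mul s t = mul s' t → s = s')
    (hrcancel : ∀ s t t' : G, mul s t = mul s t' → t = t') :
    ∃ e : G, (∀ g : G, mul e g = g ∧ mul g e = g) ∧
      ∃ inv : G → G, (∀ g : G, mul g (inv g) = e ∧ mul (inv g) g = e) ∧ Continuous inv := by
  classical
  letI : Mul G := ⟨mul⟩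
  letI : Semigroup G := ⟨hassoc⟩
  have hmul_eq : ∀ a b : G, a * b = mul a b := fun _ _ => rfl
  have hcml : ∀ r : G, Continuous (· * r) := fun r =>
    hcont.comp (Continuous.prodMk_left r)
  -- get an idempotent in G
  obtain ⟨e, he⟩ : ∃ m : G, m * m = m :=
    exists_idempotent_of_compact_t2_of_continuous_mul_left hcml
  rw [hmul_eq] at he
  -- e is a two-sided identity
  have hel : ∀ g : G, mul e g = g := by
    intro g
    apply hrcancel e
    rw [← hassoc, he]
  have her : ∀ g : G, mul g e = g := by
    intro g
    apply hlcancel _ _ e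
    rw [hassoc, he]
  -- every g has a right inverse
  have key : ∀ g : G, ∃ h : G, mul g h = e := by
    intro g
    -- powers of g: p n = g^(n+1)
    set p : ℕ → G := fun n => Nat.rec g (fun _ x => mul g x) n with hp
    have hps : ∀ n, p (n + 1) = mul g (p n) := fun n => rfl
    have hpadd : ∀ m n : ℕ, mul (p m) (p n) = p (m + n + 1) := by
      intro m; induction m with
      | zero =>
        intro n
        show mul g (p n) = p (0 + n + 1)
        rw [Nat.zero_add]
      | succ k ih =>
        intro n
        rw [hps, hassoc, ih, show k + 1 + n + 1 = (k + n + 1) + 1 by omega, hps]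
    set A : Set G := Set.range p with hA
    set S : Set G := closure A with hS
    have hScompact : IsCompact S := isClosed_closure.isCompact
    have hSne : S.Nonempty := ⟨g, subset_closure ⟨0, rfl⟩⟩
    -- products of elements of S land in closure of range (p ∘ (·+1))
    have hprod : ∀ x ∈ S, ∀ y ∈ S,
        mul x y ∈ closure (Set.range fun n => p (n + 1)) := by
      intro x hx y hy
      have h1 : (x, y) ∈ closure (A ×ˢ A) := by
        rw [closure_prod_eq]; exact ⟨hx, hy⟩
      have h2 : mul x y ∈ closure ((fun q : G × G => mul q.1 q.2) '' (A ×ˢ A)) := by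
        exact (image_closure_subset_closure_image hcont) ⟨(x, y), h1, rfl⟩
      refine closure_mono ?_ h2
      rintro _ ⟨⟨a, b⟩, ⟨⟨m, rfl⟩, ⟨n, rfl⟩⟩, rfl⟩
      exact ⟨m + n, (hpadd m n).symm⟩
    have hsub1 : closure (Set.range fun n => p (n + 1)) ⊆ S :=
      closure_mono (by rintro _ ⟨n, rfl⟩; exact ⟨n + 1, rfl⟩)
    have hSmul : ∀ x ∈ S, ∀ y ∈ S, x * y ∈ S := fun x hx y hy =>
      hsub1 (hprod x hx y hy)
    -- an idempotent in S must be e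
    obtain ⟨f, hfS, hff⟩ :=
      exists_idempotent_in_compact_subsemigroup hcml S hSne hScompact hSmul
    rw [hmul_eq] at hff
    have hfe : f = e := hrcancel f f e (by rw [hff, her])
    have heS : e ∈ S := hfe ▸ hfS
    -- e lies in closure of shifted powers
    have he2 : e ∈ closure (Set.range fun n => p (n + 1)) := by
      have := hprod e heS e heS
      rwa [show mul e e = e from hel e] at this
    -- mul g '' S is closed and contains all shifted powers
    have hgS : IsClosed ((fun x => mul g x) '' S) :=
      (hScompact.image (hcont.comp (Continuous.prodMk_right g))).isClosed
    have hsub2 : closure (Set.range fun n => p (n + 1)) ⊆ (fun x => mul g x) '' S := by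
      apply closure_minimal _ hgS
      rintro _ ⟨n, rfl⟩
      exact ⟨p n, subset_closure ⟨n, rfl⟩, (hps n).symm⟩
    obtain ⟨h, _, hh⟩ := hsub2 he2
    exact ⟨h, hh⟩
  -- right inverses are two-sided
  have key2 : ∀ g h : G, mul g h = e → mul h g = e := by
    intro g h hgh
    apply hlcancel _ _ h
    rw [hassoc, hgh, her, hel]
  -- the graph of inversion
  set K : Set (G × G) := {q : G × G | mul q.1 q.2 = e} with hK
  have hKclosed : IsClosed K := isClosed_singleton.preimage hcont
  haveI : CompactSpace K := isCompact_iff_compactSpace.mp hKclosed.isCompact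
  have hbij : Function.Bijective (fun q : K => (q : G × G).1) := by
    constructor
    · rintro ⟨⟨a, b⟩, hab⟩ ⟨⟨c, d⟩, hcd⟩ hac
      simp only at hac
      subst hac
      have : b = d := hrcancel a b d (hab.trans hcd.symm)
      subst this; rfl
    · intro g
      obtain ⟨h, hh⟩ := key g
      exact ⟨⟨(g, h), hh⟩, rfl⟩
  let F : K ≃ₜ G :=
    Continuous.homeoOfEquivCompactToT2 (f := Equiv.ofBijective _ hbij)
      (continuous_fst.comp continuous_subtype_val)
  refine ⟨e, fun g => ⟨hel g, her g⟩, fun g => ((F.symm g : G × G)).2, fun g => ?_,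
    continuous_snd.comp (continuous_subtype_val.comp F.symm.continuous)⟩
  have h1 : ((F.symm g : G × G)).1 = g := F.apply_symm_apply g
  have h2 : mul g ((F.symm g : G × G)).2 = e := by
    have hmem : mul ((F.symm g : G × G)).1 ((F.symm g : G × G)).2 = e := (F.symm g).2
    rw [h1] at hmem
    exact hmem
  exact ⟨h2, key2 _ _ h2⟩
end

section
/- Let G be a compact Hausdorff space with a continuous associative multiplication (s,t) ↦ s·t. Then the linear span of the set of functions {(s,t) ↦ f(s·t)·g(t) : f, g ∈ C(G,ℂ)} is dense in C(G×G, ℂ) with the supremum norm if and only if the cancellation law (s·t = s'·t ⟹ s = s') holds for all s, s', t ∈ G. -/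
/-- For a compact Hausdorff space `G` with a continuous associative multiplication, the
linear span of the functions `(s,t) ↦ f(s·t)·g(t)` (for `f, g ∈ C(G,ℂ)`) is dense in
`C(G × G, ℂ)` (with the supremum norm) if and only if the cancellation law
`s·t = s'·t ⟹ s = s'` holds. -/
theorem stmt_5 {G : Type*} [TopologicalSpace G] [CompactSpace G] [T2Space G]
    (mul : G → G → G) (hcont : Continuous fun p : G × G => mul p.1 p.2)
    (hassoc : ∀ a b c : G, mul (mul a b) c = mul a (mul b c)) :
    Dense (Submodule.span ℂ
        {h : C(G × G, ℂ) | ∃ f g : C(G, ℂ),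
          h = (f.comp ⟨fun p : G × G => mul p.1 p.2, hcont⟩) *
              (g.comp ⟨Prod.snd, continuous_snd⟩)} : Set C(G × G, ℂ))
      ↔ ∀ s s' t : G, mul s t = mul s' t → s = s' := by
  set S : Set C(G × G, ℂ) := {h : C(G × G, ℂ) | ∃ f g : C(G, ℂ),
      h = (f.comp ⟨fun p : G × G => mul p.1 p.2, hcont⟩) *
          (g.comp ⟨Prod.snd, continuous_snd⟩)} with hSdef
  constructor
  · -- dense → cancellation
    intro hdense s s' t hst
    by_contra hne
    -- every element of the span agrees at (s,t) and (s',t)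
    have hsub : (Submodule.span ℂ S : Set C(G × G, ℂ)) ⊆
        {h : C(G × G, ℂ) | h (s, t) = h (s', t)} := by
      intro h hh
      induction hh using Submodule.span_induction with
      | mem x hx =>
        obtain ⟨f, g, rfl⟩ := hx
        simp only [Set.mem_setOf_eq, ContinuousMap.mul_apply, ContinuousMap.comp_apply,
          ContinuousMap.coe_mk, hst]
      | zero => simp
      | add x y _ _ hx hy =>
        simp only [Set.mem_setOf_eq, ContinuousMap.add_apply] at *
        rw [hx, hy]
      | smul c x _ hx =>
        simp only [Set.mem_setOf_eq, ContinuousMap.smul_apply] at *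
        rw [hx]
    have hclosed : IsClosed {h : C(G × G, ℂ) | h (s, t) = h (s', t)} :=
      isClosed_eq (continuous_eval_const _) (continuous_eval_const _)
    have hall : ∀ h : C(G × G, ℂ), h (s, t) = h (s', t) := by
      intro h
      have : closure (Submodule.span ℂ S : Set C(G × G, ℂ)) ⊆
          {h : C(G × G, ℂ) | h (s, t) = h (s', t)} := hclosed.closure_subset_iff.mpr hsub
      exact this (by rw [hdense.closure_eq]; trivial)
    -- a continuous function separating (s,t) from (s',t)
    have hpts : (s, t) ≠ (s', t) := by
      intro h; exact hne (congrArg Prod.fst h)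
    obtain ⟨f, hf0, hf1, -⟩ := exists_continuous_zero_one_of_isClosed
      (isClosed_singleton (x := (s, t))) (isClosed_singleton (x := (s', t)))
      (by simpa [Set.disjoint_singleton] using hpts)
    have := hall ⟨fun p => (f p : ℂ), Complex.continuous_ofReal.comp f.continuous⟩
    simp only [ContinuousMap.coe_mk] at this
    rw [hf0 rfl, hf1 rfl] at this
    exact zero_ne_one (by exact_mod_cast this)
  · -- cancellation → dense
    intro hcancel
    have h1 : (1 : C(G × G, ℂ)) ∈ Submodule.span ℂ S :=
      Submodule.subset_span ⟨1, 1, by ext p; simp⟩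
    have hmulS : ∀ x ∈ S, ∀ y ∈ S, x * y ∈ S := by
      rintro x ⟨f1, g1, rfl⟩ y ⟨f2, g2, rfl⟩
      exact ⟨f1 * f2, g1 * g2, by ext p; simp; ring⟩
    have hmul : ∀ x y : C(G × G, ℂ), x ∈ Submodule.span ℂ S → y ∈ Submodule.span ℂ S →
        x * y ∈ Submodule.span ℂ S := by
      intro x y hx hy
      induction hx using Submodule.span_induction with
      | mem a ha =>
        induction hy using Submodule.span_induction with
        | mem b hb => exact Submodule.subset_span (hmulS a ha b hb)
        | zero => simpa using Submodule.zero_mem _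
        | add b c _ _ hb hc => rw [mul_add]; exact Submodule.add_mem _ hb hc
        | smul c b _ hb => rw [mul_smul_comm]; exact Submodule.smul_mem _ _ hb
      | zero => simpa using Submodule.zero_mem _
      | add a b _ _ ha hb => rw [add_mul]; exact Submodule.add_mem _ ha hb
      | smul c a _ ha => rw [smul_mul_assoc]; exact Submodule.smul_mem _ _ ha
    have hstar : ∀ x : C(G × G, ℂ), x ∈ Submodule.span ℂ S → star x ∈ Submodule.span ℂ S := by
      intro x hx
      induction hx using Submodule.span_induction with
      | mem a ha =>
        obtain ⟨f, g, rfl⟩ := ha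
        refine Submodule.subset_span ⟨star f, star g, ?_⟩
        ext p
        simp [mul_comm]
      | zero => simpa using Submodule.zero_mem _
      | add a b _ _ ha hb => rw [star_add]; exact Submodule.add_mem _ ha hb
      | smul c a _ ha =>
        rw [star_smul]
        exact Submodule.smul_mem _ _ ha
    let A : StarSubalgebra ℂ C(G × G, ℂ) :=
      { toSubalgebra := (Submodule.span ℂ S).toSubalgebra h1 hmul
        star_mem' := fun hx => hstar _ hx }
    have hAcoe : (A : Set C(G × G, ℂ)) = (Submodule.span ℂ S : Set C(G × G, ℂ)) := rfl
    -- A separates points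
    have hsep : A.SeparatesPoints := by
      intro p q hpq
      rcases eq_or_ne p.2 q.2 with ht | ht
      · -- second coordinates equal, so mul p.1 p.2 ≠ mul q.1 q.2
        have hm : mul p.1 p.2 ≠ mul q.1 q.2 := by
          intro h
          apply hpq
          have : p.1 = q.1 := hcancel _ _ _ (by rw [h, ht])
          exact Prod.ext this ht
        obtain ⟨f, hf0, hf1, -⟩ := exists_continuous_zero_one_of_isClosed
          (isClosed_singleton (x := mul p.1 p.2)) (isClosed_singleton (x := mul q.1 q.2))
          (by simpa [Set.disjoint_singleton] using hm)
        set F : C(G, ℂ) := ⟨fun x => (f x : ℂ), Complex.continuous_ofReal.comp f.continuous⟩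
        refine ⟨_, ⟨(F.comp ⟨fun p : G × G => mul p.1 p.2, hcont⟩) *
            ((1 : C(G, ℂ)).comp ⟨Prod.snd, continuous_snd⟩),
            Submodule.subset_span ⟨F, 1, rfl⟩, rfl⟩, ?_⟩
        simp only [ContinuousMap.coe_mul, ContinuousMap.coe_comp, Pi.mul_apply,
          Function.comp_apply, ContinuousMap.coe_mk, ContinuousMap.one_apply, mul_one, F]
        rw [hf0 rfl, hf1 rfl]
        norm_num
      · -- second coordinates differ
        obtain ⟨f, hf0, hf1, -⟩ := exists_continuous_zero_one_of_isClosed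
          (isClosed_singleton (x := p.2)) (isClosed_singleton (x := q.2))
          (by simpa [Set.disjoint_singleton] using ht)
        set F : C(G, ℂ) := ⟨fun x => (f x : ℂ), Complex.continuous_ofReal.comp f.continuous⟩
        refine ⟨_, ⟨((1 : C(G, ℂ)).comp ⟨fun p : G × G => mul p.1 p.2, hcont⟩) *
            (F.comp ⟨Prod.snd, continuous_snd⟩),
            Submodule.subset_span ⟨1, F, rfl⟩, rfl⟩, ?_⟩
        simp only [ContinuousMap.coe_mul, ContinuousMap.coe_comp, Pi.mul_apply,
          Function.comp_apply, ContinuousMap.coe_mk, ContinuousMap.one_apply, one_mul, F]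
        rw [hf0 rfl, hf1 rfl]
        norm_num
    have htop := ContinuousMap.starSubalgebra_topologicalClosure_eq_top_of_separatesPoints A hsep
    rw [dense_iff_closure_eq]
    have : closure (A : Set C(G × G, ℂ)) = (A.topologicalClosure : Set C(G × G, ℂ)) := rfl
    rw [← hAcoe, this, htop]
    rfl
end

section
/- Let G be a compact Hausdorff space with a continuous associative multiplication (s,t) ↦ s·t. Then the linear span of the set of functions {(s,t) ↦ f(s)·g(s·t) : f, g ∈ C(G,ℂ)} is dense in C(G×G, ℂ) with the supremum norm if and only if the cancellation law (s·t = s·t' ⟹ t = t') holds for all s, t, t' ∈ G. -/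
open scoped Pointwise

lemma sep_points {X : Type*} [TopologicalSpace X] [CompactSpace X] [T2Space X]
    {a b : X} (h : a ≠ b) : ∃ f : C(X, ℂ), f a ≠ f b := by
  obtain ⟨f, hf0, hf1, -⟩ := exists_continuous_zero_one_of_isClosed
    (isClosed_singleton (x := a)) (isClosed_singleton (x := b))
    (Set.disjoint_singleton.mpr h)
  refine ⟨(⟨Complex.ofReal, Complex.continuous_ofReal⟩ : C(ℝ, ℂ)).comp f, ?_⟩
  have ha : f a = 0 := hf0 rfl
  have hb : f b = 1 := hf1 rfl
  simp [ha, hb]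

/-- For a compact Hausdorff space `G` with a continuous associative multiplication, the
linear span of the functions `(s,t) ↦ f(s)·g(s·t)` (for `f, g ∈ C(G,ℂ)`) is dense in
`C(G × G, ℂ)` (with the supremum norm) if and only if the cancellation law
`s·t = s·t' ⟹ t = t'` holds. -/
theorem stmt_6 {G : Type*} [TopologicalSpace G] [CompactSpace G] [T2Space G]
    (mul : G → G → G) (hcont : Continuous fun p : G × G => mul p.1 p.2)
    (hassoc : ∀ a b c : G, mul (mul a b) c = mul a (mul b c)) :
    Dense (Submodule.span ℂ
        {h : C(G × G, ℂ) | ∃ f g : C(G, ℂ),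
          h = (f.comp ⟨Prod.fst, continuous_fst⟩) *
              (g.comp ⟨fun p : G × G => mul p.1 p.2, hcont⟩)} : Set C(G × G, ℂ))
      ↔ ∀ s t t' : G, mul s t = mul s t' → t = t' := by
  set S : Set C(G × G, ℂ) :=
    {h : C(G × G, ℂ) | ∃ f g : C(G, ℂ),
      h = (f.comp ⟨Prod.fst, continuous_fst⟩) *
          (g.comp ⟨fun p : G × G => mul p.1 p.2, hcont⟩)} with hS
  constructor
  · intro hdense s t t' heq
    by_contra hne
    obtain ⟨f, hf⟩ := sep_points hne
    -- evaluation difference functional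
    let φ : C(G × G, ℂ) →L[ℂ] ℂ :=
      ContinuousMap.evalCLM ℂ (s, t) - ContinuousMap.evalCLM ℂ (s, t')
    have hker : (Submodule.span ℂ S : Set C(G × G, ℂ)) ⊆ (LinearMap.ker φ.toLinearMap : Set C(G × G, ℂ)) := by
      intro x hx
      refine Submodule.span_le.mpr ?_ hx
      rintro h ⟨f', g', rfl⟩
      simp [φ, ContinuousMap.evalCLM, heq, sub_eq_zero]
    have hclosed : IsClosed (LinearMap.ker φ.toLinearMap : Set C(G × G, ℂ)) :=
      (isClosed_singleton (x := (0 : ℂ))).preimage φ.continuous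
    have : closure (Submodule.span ℂ S : Set C(G × G, ℂ)) ⊆
        (LinearMap.ker φ.toLinearMap : Set C(G × G, ℂ)) :=
      closure_minimal hker hclosed
    have huniv := hdense.closure_eq
    have hmem : (f.comp ⟨Prod.snd, continuous_snd⟩ : C(G × G, ℂ)) ∈
        (LinearMap.ker φ.toLinearMap : Set C(G × G, ℂ)) := by
      apply this
      rw [huniv]; trivial
    have := (LinearMap.mem_ker).mp hmem
    simp [φ, ContinuousMap.evalCLM, sub_eq_zero] at this
    exact hf this
  · intro hcancel
    -- the span is a star subalgebra
    have hone : (1 : C(G × G, ℂ)) ∈ Submodule.span ℂ S := by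
      apply Submodule.subset_span
      exact ⟨1, 1, by ext p; simp⟩
    have hmulS : S * S ⊆ S := by
      rintro x ⟨a, ha, b, hb, rfl⟩
      obtain ⟨f₁, g₁, rfl⟩ := ha
      obtain ⟨f₂, g₂, rfl⟩ := hb
      exact ⟨f₁ * f₂, g₁ * g₂, by ext p; simp; ring⟩
    have hmul : ∀ x y : C(G × G, ℂ), x ∈ Submodule.span ℂ S → y ∈ Submodule.span ℂ S →
        x * y ∈ Submodule.span ℂ S := by
      intro x y hx hy
      have : x * y ∈ Submodule.span ℂ S * Submodule.span ℂ S :=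
        Submodule.mul_mem_mul hx hy
      rw [Submodule.span_mul_span] at this
      exact Submodule.span_mono hmulS (Submodule.span_le.mpr Submodule.subset_span this)
    have hstar : ∀ x : C(G × G, ℂ), x ∈ Submodule.span ℂ S →
        star x ∈ Submodule.span ℂ S := by
      intro x hx
      induction hx using Submodule.span_induction with
      | mem h hh =>
        obtain ⟨f, g, rfl⟩ := hh
        apply Submodule.subset_span
        exact ⟨star f, star g, by ext p; simp⟩
      | zero => simpa using Submodule.zero_mem _
      | add a b _ _ ha hb => rw [star_add]; exact Submodule.add_mem _ ha hb
      | smul c a _ ha =>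
        rw [star_smul]
        exact Submodule.smul_mem _ _ ha
    let A : StarSubalgebra ℂ C(G × G, ℂ) :=
      { (Submodule.span ℂ S).toSubalgebra hone hmul with
        star_mem' := fun hx => hstar _ hx }
    have hAsep : A.SeparatesPoints := by
      rintro ⟨s, t⟩ ⟨s', t'⟩ hne
      by_cases hs : s = s'
      · subst hs
        have ht : t ≠ t' := fun h => hne (by rw [h])
        have hmne : mul s t ≠ mul s t' := fun h => ht (hcancel s t t' h)
        obtain ⟨g, hg⟩ := sep_points hmne
        refine ⟨_, ⟨(1 : C(G, ℂ)).comp ⟨Prod.fst, continuous_fst⟩ *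
          g.comp ⟨fun p : G × G => mul p.1 p.2, hcont⟩,
          Submodule.subset_span ⟨1, g, rfl⟩, rfl⟩, ?_⟩
        simpa using hg
      · obtain ⟨f, hf⟩ := sep_points hs
        refine ⟨_, ⟨f.comp ⟨Prod.fst, continuous_fst⟩ *
          (1 : C(G, ℂ)).comp ⟨fun p : G × G => mul p.1 p.2, hcont⟩,
          Submodule.subset_span ⟨f, 1, rfl⟩, rfl⟩, ?_⟩
        simpa using hf
    have htop := ContinuousMap.starSubalgebra_topologicalClosure_eq_top_of_separatesPoints A hAsep
    rw [dense_iff_closure_eq]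
    have : closure (A : Set C(G × G, ℂ)) = Set.univ := by
      have := congrArg (fun B : StarSubalgebra ℂ C(G × G, ℂ) => (B : Set C(G × G, ℂ))) htop
      simp [StarSubalgebra.topologicalClosure] at this
      exact this
    exact this
end

section
/- Let H be an infinite-dimensional complex Hilbert space and 𝒦⁺ = Unitization ℂ 𝒦(H) the minimal unitization of the algebra of compact operators on H. Then every tracial state on 𝒦⁺ vanishes on the ideal of compact operators: if φ is a tracial state on 𝒦⁺, then φ(k) = 0 for every compact operator k ∈ 𝒦(H) ⊆ 𝒦⁺. -/
set_option maxHeartbeats 8000000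
set_option synthInstance.maxHeartbeats 1000000


open Metric ContinuousLinearMap in
/-- The adjoint (star) of a compact operator on a complex Hilbert space is compact
(Schauder's theorem). -/
theorem isCompactOperator_star {H : Type*} [NormedAddCommGroup H] [InnerProductSpace ℂ H]
    [CompleteSpace H] {T : H →L[ℂ] H} (hT : IsCompactOperator ⇑T) :
    IsCompactOperator ⇑(star T) := by
  classical
  set A : H →L[ℂ] H := star T with hAdef
  set S : H →L[ℂ] H := T ∘L A with hSdef
  have hS : IsCompactOperator ⇑S := by
    have h := hT.comp_clm A
    rwa [hSdef, coe_comp']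
  have htb : TotallyBounded (⇑A '' closedBall (0 : H) 1) := by
    rw [Metric.totallyBounded_iff]
    intro ε hε
    have hKtb : TotallyBounded (⇑S '' closedBall (0 : H) 1) := by
      obtain ⟨K, hK, hKsub⟩ := hS.image_closedBall_subset_compact (𝕜₁ := ℂ) 1
      exact hK.totallyBounded.subset hKsub
    have hδpos : (0 : ℝ) < ε ^ 2 / 8 := by positivity
    obtain ⟨t, htfin, htsub⟩ := (Metric.totallyBounded_iff).mp hKtb (ε ^ 2 / 8) hδpos
    let u : H → H := fun y =>
      if h : ∃ x ∈ closedBall (0 : H) 1, dist (S x) y < ε ^ 2 / 8 then h.choose else 0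
    refine ⟨(fun y => A (u y)) '' t, htfin.image _, ?_⟩
    rintro _ ⟨x, hxB, rfl⟩
    have hx : S x ∈ ⋃ y ∈ t, ball y (ε ^ 2 / 8) := htsub ⟨x, hxB, rfl⟩
    simp only [Set.mem_iUnion, mem_ball, exists_prop] at hx
    obtain ⟨y, hyt, hxy⟩ := hx
    have hex : ∃ x' ∈ closedBall (0 : H) 1, dist (S x') y < ε ^ 2 / 8 := ⟨x, hxB, hxy⟩
    have huy : u y = hex.choose := dif_pos hex
    obtain ⟨hx'B, hx'y⟩ := hex.choose_spec
    set x' := hex.choose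
    refine Set.mem_iUnion₂.mpr ⟨A (u y), Set.mem_image_of_mem _ hyt, ?_⟩
    rw [mem_ball, huy]
    set w := x - x' with hw
    have hSw : ‖S w‖ = dist (S x) (S x') := by
      rw [dist_eq_norm, hw, map_sub]
    have key : dist (A x) (A x') ^ 2 ≤ 2 * dist (S x) (S x') := by
      rw [dist_eq_norm, ← map_sub, ← hw]
      have h1 : ‖A w‖ ^ 2 = RCLike.re (inner (𝕜 := ℂ) w (S w)) := by
        rw [← inner_self_eq_norm_sq (𝕜 := ℂ)]
        congr 1
        rw [hAdef, star_eq_adjoint, ContinuousLinearMap.adjoint_inner_left]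
        rfl
      have h2 : RCLike.re (inner (𝕜 := ℂ) w (S w)) ≤ ‖w‖ * ‖S w‖ :=
        le_trans (RCLike.re_le_norm _) (norm_inner_le_norm (𝕜 := ℂ) w (S w))
      have h3 : ‖w‖ ≤ 2 := by
        rw [hw, ← dist_eq_norm]
        simp only [mem_closedBall] at hxB hx'B
        calc dist x x' ≤ dist x 0 + dist 0 x' := dist_triangle x 0 x'
        _ ≤ 1 + 1 := by rw [dist_comm (0 : H) x']; exact add_le_add hxB hx'B
        _ = 2 := by norm_num
      have h4 : (0 : ℝ) ≤ ‖S w‖ := norm_nonneg _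
      calc ‖A w‖ ^ 2 ≤ ‖w‖ * ‖S w‖ := h1 ▸ h2
      _ ≤ 2 * ‖S w‖ := by nlinarith
      _ = 2 * dist (S x) (S x') := by rw [hSw]
    have hSxx' : dist (S x) (S x') < ε ^ 2 / 4 := by
      calc dist (S x) (S x') ≤ dist (S x) y + dist y (S x') := dist_triangle _ _ _
      _ < ε ^ 2 / 8 + ε ^ 2 / 8 := by rw [dist_comm y (S x')]; exact add_lt_add hxy hx'y
      _ = ε ^ 2 / 4 := by ring
    have hd0 : (0 : ℝ) ≤ dist (A x) (A x') := dist_nonneg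
    nlinarith
  refine ⟨closure (⇑A '' closedBall (0 : H) 1),
    htb.closure.isCompact_of_isClosed isClosed_closure, ?_⟩
  refine Filter.mem_of_superset (closedBall_mem_nhds (0 : H) one_pos) ?_
  intro x hx
  exact subset_closure (Set.mem_image_of_mem _ hx)

/-- The C*-algebra `𝒦(H)` of compact operators on a complex Hilbert space `H`, realized
as the (closed) non-unital star-subalgebra of the bounded operators `H →L[ℂ] H` consisting
of the compact operators. -/
noncomputable def compactOperators (H : Type*) [NormedAddCommGroup H]
    [InnerProductSpace ℂ H] [CompleteSpace H] :
    NonUnitalStarSubalgebra ℂ (H →L[ℂ] H) where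
  carrier := {T : H →L[ℂ] H | IsCompactOperator T}
  add_mem' hf hg := hf.add hg
  zero_mem' := isCompactOperator_zero
  smul_mem' c _ hf := hf.smul c
  mul_mem' := fun {a b} ha _ => (ha.comp_clm b : IsCompactOperator (⇑a ∘ ⇑b))
  star_mem' := fun {a} ha => isCompactOperator_star ha

instance compactOperators.isClosed (H : Type*) [NormedAddCommGroup H]
    [InnerProductSpace ℂ H] [CompleteSpace H] :
    IsClosed ((compactOperators H : Set (H →L[ℂ] H))) :=
  isClosed_setOf_isCompactOperator


section RankOne

open ContinuousLinearMap

variable {H : Type*} [NormedAddCommGroup H] [InnerProductSpace ℂ H] [CompleteSpace H]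

local notation "⟪" x ", " y "⟫" => @inner ℂ _ _ x y

/-- The rank-one operator `z ↦ ⟪y, z⟫ • x`. -/
noncomputable def rankOneCLM (x y : H) : H →L[ℂ] H := (innerSL ℂ y).smulRight x

lemma rankOneCLM_apply (x y z : H) : rankOneCLM x y z = ⟪y, z⟫ • x := rfl

lemma isCompactOperator_rankOneCLM (x y : H) : IsCompactOperator ⇑(rankOneCLM x y) := by
  refine ⟨(fun c : ℂ => c • x) '' Metric.closedBall 0 ‖y‖,
    (isCompact_closedBall _ _).image (by fun_prop), ?_⟩
  refine Filter.mem_of_superset (Metric.closedBall_mem_nhds (0 : H) one_pos) ?_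
  intro z hz
  refine ⟨⟪y, z⟫, ?_, rfl⟩
  simp only [Metric.mem_closedBall, dist_zero_right] at hz ⊢
  calc ‖⟪y, z⟫‖ ≤ ‖y‖ * ‖z‖ := norm_inner_le_norm y z
  _ ≤ ‖y‖ * 1 := by gcongr
  _ = ‖y‖ := mul_one _

lemma star_rankOneCLM (x y : H) : star (rankOneCLM x y) = rankOneCLM y x := by
  rw [star_eq_adjoint]
  symm
  rw [ContinuousLinearMap.eq_adjoint_iff]
  intro u v
  simp only [rankOneCLM_apply, inner_smul_left, inner_smul_right, inner_conj_symm]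
  ring

lemma rankOneCLM_mul (x y z w : H) :
    rankOneCLM x y * rankOneCLM z w = ⟪y, z⟫ • rankOneCLM x w := by
  ext u
  simp only [ContinuousLinearMap.mul_apply, rankOneCLM_apply,
    ContinuousLinearMap.smul_apply, inner_smul_right, smul_smul]
  rw [mul_comm]

/-- The rank-one operator as an element of the compact operators. -/
noncomputable def rkOne (x y : H) : compactOperators H :=
  ⟨rankOneCLM x y, isCompactOperator_rankOneCLM x y⟩

@[simp] lemma rkOne_coe (x y : H) : ((rkOne x y : compactOperators H) : H →L[ℂ] H) = rankOneCLM x y := rfl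

lemma star_rkOne (x y : H) : star (rkOne x y) = rkOne y x :=
  Subtype.ext (by simpa using star_rankOneCLM x y)

lemma rkOne_mul (x y z w : H) : rkOne x y * rkOne z w = ⟪y, z⟫ • rkOne x w :=
  Subtype.ext (by simpa using rankOneCLM_mul x y z w)

lemma exists_orthonormal_seq (hdim : ¬ FiniteDimensional ℂ H) :
    ∃ e : ℕ → H, Orthonormal ℂ e := by
  obtain ⟨w, b, hb⟩ := exists_hilbertBasis ℂ H
  have hworth : Orthonormal ℂ ((↑) : w → H) := hb ▸ b.orthonormal
  have hinf : w.Infinite := by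
    by_contra hfin
    rw [Set.not_infinite] at hfin
    apply hdim
    have h1 : FiniteDimensional ℂ (Submodule.span ℂ w) := Module.Finite.span_of_finite ℂ hfin
    have h2 : IsClosed ((Submodule.span ℂ w : Submodule ℂ H) : Set H) :=
      (Submodule.span ℂ w).closed_of_finiteDimensional
    have h3 := b.dense_span
    rw [hb, Subtype.range_coe] at h3
    have h4 : Submodule.span ℂ w = ⊤ := by
      rw [← h2.submodule_topologicalClosure_eq]
      exact h3
    rw [h4] at h1
    exact h1.equiv Submodule.topEquiv
  exact ⟨_, hworth.comp (fun n => Set.Infinite.natEmbedding w hinf n) (Set.Infinite.natEmbedding w hinf).injective⟩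

lemma inr_finset_sum {ι : Type*} (s : Finset ι) (f : ι → compactOperators H) :
    ((∑ i ∈ s, f i : compactOperators H) : Unitization ℂ (compactOperators H))
      = ∑ i ∈ s, ((f i : compactOperators H) : Unitization ℂ (compactOperators H)) := by
  classical
  induction s using Finset.induction_on with
  | empty => simp
  | insert a s' h ih =>
    rw [Finset.sum_insert h, Finset.sum_insert h, Unitization.inr_add, ih]

end RankOne

open ComplexOrder in
/-- For an infinite-dimensional complex Hilbert space `H`, every tracial state on
`𝒦⁺ = Unitization ℂ 𝒦(H)` vanishes on the ideal of compact operators. -/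
theorem stmt_9 {H : Type*} [NormedAddCommGroup H] [InnerProductSpace ℂ H] [CompleteSpace H]
    (hdim : ¬ FiniteDimensional ℂ H)
    (φ : Unitization ℂ (compactOperators H) →ₗ[ℂ] ℂ)
    (hunital : φ 1 = 1)
    (hpos : ∀ a : Unitization ℂ (compactOperators H), 0 ≤ φ (star a * a))
    (htracial : ∀ a b : Unitization ℂ (compactOperators H), φ (a * b) = φ (b * a)) :
    ∀ k : compactOperators H, φ (Unitization.inr k) = 0 := by
  classical
  letI : PartialOrder (Unitization ℂ ↥(compactOperators H)) :=
    CStarAlgebra.spectralOrder _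
  haveI : StarOrderedRing (Unitization ℂ ↥(compactOperators H)) :=
    CStarAlgebra.spectralOrderedRing _
  have hφmono : ∀ x : Unitization ℂ ↥(compactOperators H), 0 ≤ x → 0 ≤ φ x := by
    intro x hx
    rw [StarOrderedRing.nonneg_iff] at hx
    refine AddSubmonoid.closure_induction ?_ ?_ ?_ hx
    · rintro _ ⟨s, rfl⟩
      exact hpos s
    · simp
    · intro u v _ _ hu hv
      rw [map_add]
      exact add_nonneg hu hv
  have hreal : ∀ x : Unitization ℂ ↥(compactOperators H), 0 ≤ x →
      (φ x).im = 0 ∧ 0 ≤ (φ x).re := by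
    intro x hx
    have h := hφmono x hx
    rw [Complex.le_def] at h
    exact ⟨h.2.symm, by simpa using h.1⟩
  have him : ∀ x : Unitization ℂ ↥(compactOperators H), IsSelfAdjoint x → (φ x).im = 0 := by
    intro x hsa
    have hp : (0 : Unitization ℂ ↥(compactOperators H)) ≤ algebraMap ℝ _ ‖x‖ + x := by
      have h := IsSelfAdjoint.neg_algebraMap_norm_le_self (a := x) hsa
      rw [← sub_nonneg] at h
      rwa [sub_neg_eq_add, add_comm] at h
    have hq : (0 : Unitization ℂ ↥(compactOperators H)) ≤ algebraMap ℝ _ ‖x‖ - x := by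
      have h := IsSelfAdjoint.le_algebraMap_norm_self (a := x) hsa
      rwa [← sub_nonneg] at h
    have h2 : φ (algebraMap ℝ _ ‖x‖ + x) - φ (algebraMap ℝ _ ‖x‖ - x) = 2 * φ x := by
      rw [← map_sub]
      have h : (algebraMap ℝ (Unitization ℂ ↥(compactOperators H)) ‖x‖ + x)
          - (algebraMap ℝ _ ‖x‖ - x) = x + x := by abel
      rw [h, map_add]
      ring
    have h3 := congrArg Complex.im h2
    rw [Complex.sub_im, (hreal _ hp).1, (hreal _ hq).1] at h3
    have h4 : (2 * φ x).im = 2 * (φ x).im := by simp [Complex.mul_im]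
    rw [h4] at h3
    linarith
  have hstar : ∀ a, φ (star a) = (starRingEnd ℂ) (φ a) := by
    intro a
    have hu : IsSelfAdjoint (a + star a) := by
      rw [IsSelfAdjoint, star_add, star_star, add_comm]
    have hv : IsSelfAdjoint (Complex.I • (a - star a)) := by
      rw [IsSelfAdjoint, star_smul, star_sub, star_star, Complex.star_def, Complex.conj_I,
        ← neg_sub a (star a), smul_neg, neg_smul, neg_neg]
    have h1 := him _ hu
    have h2 := him _ hv
    rw [map_add] at h1
    have h3 : φ (Complex.I • (a - star a)) = Complex.I * (φ a - φ (star a)) := by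
      rw [map_smul, map_sub, smul_eq_mul]
    rw [h3] at h2
    apply Complex.ext
    · simp only [Complex.mul_im, Complex.sub_re, Complex.I_re, Complex.I_im, Complex.sub_im,
        zero_mul, one_mul, zero_add] at h2
      simp only [Complex.conj_re]
      linarith
    · simp only [Complex.add_im] at h1
      simp only [Complex.conj_im]
      linarith
  have hnorm : ∀ a : Unitization ℂ ↥(compactOperators H), ‖φ a‖ ≤ ‖a‖ := by
    intro a
    set c := φ a with hc
    have h1 := hpos (a - c • 1)
    have hexp : star (a - c • 1) * (a - c • 1)
        = star a * a - c • star a - (starRingEnd ℂ c) • a + (c * (starRingEnd ℂ c)) • 1 := by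
      rw [star_sub, star_smul, sub_mul, mul_sub, mul_sub, star_one]
      simp only [smul_mul_assoc, mul_smul_comm, one_mul, mul_one, smul_smul, Complex.star_def]
      abel
    have h2 : φ (star (a - c • 1) * (a - c • 1)) = φ (star a * a) - (starRingEnd ℂ c) * c := by
      rw [hexp, map_add, map_sub, map_sub, map_smul, map_smul, map_smul, hstar a, hunital,
        smul_eq_mul, smul_eq_mul, smul_eq_mul, ← hc]
      ring
    rw [h2] at h1
    rw [Complex.le_def] at h1
    obtain ⟨h1re, h1im⟩ := h1
    simp only [Complex.zero_re, Complex.sub_re] at h1re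
    have hcc : ((starRingEnd ℂ c) * c).re = ‖c‖ ^ 2 := by
      rw [mul_comm, Complex.mul_conj, Complex.ofReal_re, Complex.normSq_eq_norm_sq]
    rw [hcc] at h1re
    have halg : algebraMap ℝ (Unitization ℂ ↥(compactOperators H)) (‖a‖ ^ 2)
        = ((‖a‖ ^ 2 : ℝ) : ℂ) • 1 := by
      rw [IsScalarTower.algebraMap_apply ℝ ℂ, Algebra.algebraMap_eq_smul_one,
        Complex.coe_algebraMap]
    have h5 : star a * a ≤ algebraMap ℝ _ (‖a‖ ^ 2) :=
      CStarAlgebra.star_mul_le_algebraMap_norm_sq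
    rw [halg] at h5
    have h6 := hreal _ (sub_nonneg.mpr h5)
    have h9 : φ (((‖a‖ ^ 2 : ℝ) : ℂ) • 1 - star a * a)
        = ((‖a‖ ^ 2 : ℝ) : ℂ) - φ (star a * a) := by
      rw [map_sub, map_smul, hunital, smul_eq_mul, mul_one]
    rw [h9] at h6
    have h8 : (φ (star a * a)).re ≤ ‖a‖ ^ 2 := by
      have h6' := h6.2
      rw [Complex.sub_re, Complex.ofReal_re] at h6'
      linarith
    have hcs : ‖c‖ ^ 2 ≤ ‖a‖ ^ 2 := by linarith only [h1re, h8]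
    exact (pow_le_pow_iff_left₀ (norm_nonneg c) (norm_nonneg a) two_ne_zero).mp hcs
  -- Part 2: φ vanishes on rank-one operators
  obtain ⟨e, he⟩ := exists_orthonormal_seq (H := H) hdim
  have hee : ∀ i j, (inner ℂ (e i) (e j) : ℂ) = if i = j then 1 else 0 := fun i j =>
    orthonormal_iff_ite.mp he i j
  have h00 : (inner ℂ (e 0) (e 0) : ℂ) = 1 := by simpa using hee 0 0
  have hψmul : ∀ x y : compactOperators H,
      φ ((x * y : compactOperators H) : Unitization ℂ (compactOperators H))
      = φ ((y * x : compactOperators H) : Unitization ℂ (compactOperators H)) := by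
    intro x y
    rw [Unitization.inr_mul ℂ x y, Unitization.inr_mul ℂ y x]
    exact htracial _ _
  have hc : φ ((rkOne (e 0) (e 0) : compactOperators H) : Unitization ℂ (compactOperators H))
      = 0 := by
    set c := φ ((rkOne (e 0) (e 0) : compactOperators H) : Unitization ℂ (compactOperators H))
      with hcdef
    have hsq : rkOne (e 0) (e 0) * rkOne (e 0) (e 0) = rkOne (e 0) (e 0) := by
      rw [rkOne_mul, h00, one_smul]
    have hsa : star (rkOne (e 0) (e 0)) = rkOne (e 0) (e 0) := star_rkOne _ _
    have hcnn : 0 ≤ c := by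
      have h := hpos ((rkOne (e 0) (e 0) : compactOperators H) : Unitization ℂ (compactOperators H))
      rwa [← Unitization.inr_star, hsa, ← Unitization.inr_mul, hsq] at h
    have hdiag : ∀ i, φ ((rkOne (e i) (e i) : compactOperators H) :
        Unitization ℂ (compactOperators H)) = c := by
      intro i
      have h1 : rkOne (e i) (e 0) * rkOne (e 0) (e i) = rkOne (e i) (e i) := by
        rw [rkOne_mul, h00, one_smul]
      have h2 : rkOne (e 0) (e i) * rkOne (e i) (e 0) = rkOne (e 0) (e 0) := by
        rw [rkOne_mul, show (inner ℂ (e i) (e i) : ℂ) = 1 by simpa using hee i i, one_smul]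
      rw [← h1, hψmul, h2, hcdef]
    have hkey : ∀ n : ℕ, (n : ℝ) * c.re ≤ 1 := by
      intro n
      set q : compactOperators H := ∑ i ∈ Finset.range n, rkOne (e i) (e i) with hq
      have hqsa : star q = q := by
        rw [hq, star_sum]
        exact Finset.sum_congr rfl fun i _ => star_rkOne _ _
      have hqsq : q * q = q := by
        rw [hq, Finset.sum_mul_sum]
        have hterm : ∀ i ∈ Finset.range n, ∀ j ∈ Finset.range n,
            rkOne (e i) (e i) * rkOne (e j) (e j)
              = if i = j then rkOne (e j) (e j) else 0 := by
          intro i _ j _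
          by_cases h : i = j
          · subst h
            rw [rkOne_mul, hee i i, if_pos rfl, if_pos rfl, one_smul]
          · rw [rkOne_mul, hee i j, if_neg h, if_neg h, zero_smul]
        rw [Finset.sum_congr rfl fun i hi => Finset.sum_congr rfl fun j hj => hterm i hi j hj]
        rw [Finset.sum_congr rfl fun i (hi : i ∈ Finset.range n) =>
          Finset.sum_ite_eq (Finset.range n) i (fun j => rkOne (e j) (e j))]
        exact Finset.sum_congr rfl fun i hi => if_pos hi
      have hφq : φ (q : Unitization ℂ (compactOperators H)) = (n : ℂ) * c := by
        rw [hq, inr_finset_sum, map_sum]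
        rw [Finset.sum_congr rfl fun i _ => hdiag i, Finset.sum_const, Finset.card_range,
          nsmul_eq_mul]
      have hsub : φ ((1 : Unitization ℂ (compactOperators H)) - q) = 1 - (n : ℂ) * c := by
        rw [map_sub, hunital, hφq]
      have hselfadj : star ((1 : Unitization ℂ (compactOperators H)) - q)
          = (1 : Unitization ℂ (compactOperators H)) - q := by
        rw [star_sub, star_one, ← Unitization.inr_star, hqsa]
      have hmul2 : ((1 : Unitization ℂ (compactOperators H)) - q)
          * ((1 : Unitization ℂ (compactOperators H)) - q)
          = (1 : Unitization ℂ (compactOperators H)) - q := by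
        rw [sub_mul, one_mul, mul_sub, mul_one, ← Unitization.inr_mul, hqsq]
        abel
      have hp := hpos ((1 : Unitization ℂ (compactOperators H)) - q)
      rw [hselfadj, hmul2, hsub, Complex.le_def] at hp
      have hre := hp.1
      simp only [Complex.zero_re, Complex.sub_re, Complex.one_re, Complex.mul_re,
        Complex.natCast_re, Complex.natCast_im, zero_mul, sub_zero] at hre
      linarith
    have hcim : c.im = 0 := by
      rw [Complex.le_def] at hcnn
      simpa using hcnn.2.symm
    have hcre : c.re = 0 := by
      rw [Complex.le_def] at hcnn
      have hnn : 0 ≤ c.re := by simpa using hcnn.1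
      by_contra hne
      have hpos' : 0 < c.re := lt_of_le_of_ne hnn (Ne.symm hne)
      obtain ⟨n, hn⟩ := exists_nat_gt (1 / c.re)
      rw [div_lt_iff₀ hpos'] at hn
      have := hkey n
      linarith
    exact Complex.ext hcre hcim
  have hrk1 : ∀ x y : H,
      φ ((rkOne x y : compactOperators H) : Unitization ℂ (compactOperators H)) = 0 := by
    intro x y
    have h1 : rkOne x (e 0) * rkOne (e 0) y = rkOne x y := by
      rw [rkOne_mul, h00, one_smul]
    have h2 : rkOne (e 0) y * rkOne x (e 0) = (inner ℂ y x : ℂ) • rkOne (e 0) (e 0) :=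
      rkOne_mul _ _ _ _
    rw [← h1, hψmul, h2, Unitization.inr_smul, map_smul, hc, smul_zero]
  -- Part 3: approximation by finite-rank operators
  intro k
  have hmain : ∀ ε : ℝ, 0 < ε →
      ‖φ ((k : compactOperators H) : Unitization ℂ (compactOperators H))‖ ≤ ε := by
    intro ε hε
    set T : H →L[ℂ] H := (k : H →L[ℂ] H) with hT
    have hk : IsCompactOperator ⇑T := k.2
    obtain ⟨K, hK, hKsub⟩ := hk.image_closedBall_subset_compact (𝕜₁ := ℂ) 1
    have htb : TotallyBounded (⇑T '' Metric.closedBall 0 1) :=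
      hK.totallyBounded.subset hKsub
    obtain ⟨t, htfin, htsub⟩ := (Metric.totallyBounded_iff).mp htb ε hε
    haveI : FiniteDimensional ℂ (Submodule.span ℂ t) := Module.Finite.span_of_finite ℂ htfin
    set V := Submodule.span ℂ t with hV
    let b := stdOrthonormalBasis ℂ V
    set F : compactOperators H :=
      ∑ j, rkOne ((b j : H)) (ContinuousLinearMap.adjoint T (b j)) with hF
    have hφF : φ (F : Unitization ℂ (compactOperators H)) = 0 := by
      rw [hF, inr_finset_sum, map_sum]
      exact Finset.sum_eq_zero fun j _ => hrk1 _ _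
    have hFcoe : ((F : compactOperators H) : H →L[ℂ] H)
        = ∑ j, rankOneCLM (b j : H) (ContinuousLinearMap.adjoint T (b j)) := by
      rw [hF]
      exact AddSubmonoidClass.coe_finset_sum _ _
    have hFapp : ∀ z : H, ((F : compactOperators H) : H →L[ℂ] H) z
        = (V.orthogonalProjectionOnto (T z) : H) := by
      intro z
      rw [hFcoe, ContinuousLinearMap.sum_apply, b.orthogonalProjectionOnto_apply_eq_sum (T z)]
      simp only [AddSubmonoidClass.coe_finset_sum, Submodule.coe_smul, rankOneCLM_apply,
        ContinuousLinearMap.adjoint_inner_left]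
    have hdist : ∀ z : H, ‖z‖ ≤ 1 →
        ‖T z - ((F : compactOperators H) : H →L[ℂ] H) z‖ ≤ ε := by
      intro z hz
      have hmem : T z ∈ ⇑T '' Metric.closedBall 0 1 :=
        ⟨z, by simpa [Metric.mem_closedBall, dist_zero_right] using hz, rfl⟩
      have h := htsub hmem
      simp only [Set.mem_iUnion, Metric.mem_ball, exists_prop] at h
      obtain ⟨y, hyt, hy⟩ := h
      have hyV : y ∈ V := Submodule.subset_span hyt
      have hmin : ‖T z - (V.orthogonalProjectionOnto (T z) : H)‖ ≤ ‖T z - y‖ := by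
        rw [show (V.orthogonalProjectionOnto (T z) : H) = V.starProjection (T z) from rfl,
          Submodule.starProjection_minimal]
        exact ciInf_le ⟨0, by rintro r ⟨w, rfl⟩; exact norm_nonneg _⟩ (⟨y, hyV⟩ : V)
      rw [hFapp z]
      refine hmin.trans ?_
      rw [← dist_eq_norm]
      exact le_of_lt hy
    have hopnorm : ‖(k - F : compactOperators H)‖ ≤ ε := by
      have hns : ‖(k - F : compactOperators H)‖
          = ‖T - ((F : compactOperators H) : H →L[ℂ] H)‖ := rfl
      rw [hns]
      refine ContinuousLinearMap.opNorm_le_bound _ hε.le fun z => ?_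
      rcases eq_or_ne z 0 with rfl | hz
      · simp
      · have hnz : 0 < ‖z‖ := norm_pos_iff.mpr hz
        have hcne : ((‖z‖ : ℂ)) ≠ 0 := by exact_mod_cast hnz.ne'
        set u : H := ((‖z‖ : ℂ))⁻¹ • z with hu
        have hun : ‖u‖ ≤ 1 := by
          rw [hu, norm_smul, norm_inv]
          simp only [Complex.norm_real, Real.norm_eq_abs, abs_of_nonneg hnz.le]
          rw [inv_mul_cancel₀ hnz.ne']
        have h2 : (T - ((F : compactOperators H) : H →L[ℂ] H)) z
            = (‖z‖ : ℂ) • ((T - ((F : compactOperators H) : H →L[ℂ] H)) u) := by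
          rw [hu, map_smul, smul_smul, mul_inv_cancel₀ hcne, one_smul]
        rw [h2, norm_smul]
        simp only [Complex.norm_real, Real.norm_eq_abs, abs_of_nonneg hnz.le]
        rw [mul_comm ε ‖z‖]
        have h3 : ‖(T - ((F : compactOperators H) : H →L[ℂ] H)) u‖ ≤ ε := by
          rw [ContinuousLinearMap.sub_apply]
          exact hdist u hun
        exact mul_le_mul_of_nonneg_left h3 hnz.le
    have hsplit : φ ((k : compactOperators H) : Unitization ℂ (compactOperators H))
        = φ (((k - F : compactOperators H)) : Unitization ℂ (compactOperators H))
          + φ ((F : compactOperators H) : Unitization ℂ (compactOperators H)) := by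
      rw [← map_add, ← Unitization.inr_add, sub_add_cancel]
    rw [hsplit, hφF, add_zero]
    calc ‖φ (((k - F : compactOperators H)) : Unitization ℂ (compactOperators H))‖
        ≤ ‖(((k - F : compactOperators H)) : Unitization ℂ (compactOperators H))‖ := hnorm _
      _ = ‖(k - F : compactOperators H)‖ := Unitization.norm_inr _
      _ ≤ ε := hopnorm
  have h0 : ‖φ ((k : compactOperators H) : Unitization ℂ (compactOperators H))‖ ≤ 0 :=
    le_of_forall_pos_le_add fun ε hε => by simpa using hmain ε hε
  have := norm_le_zero_iff.mp h0
  simpa using this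
end

section
/- Let S be the unilateral shift on ℓ²(ℕ, ℂ), i.e., the bounded linear operator determined by (Sx)(0) = 0 and (Sx)(n+1) = x(n) for all x ∈ ℓ²(ℕ, ℂ) and n ∈ ℕ. Then the Toeplitz algebra 𝒯, defined as the smallest norm-closed star-subalgebra of the bounded operators on ℓ²(ℕ, ℂ) containing S and the identity, contains every compact operator on ℓ²(ℕ, ℂ). -/
set_option maxHeartbeats 1000000

open scoped ComplexConjugate ENNReal NNReal
open Filter Finset Topology

noncomputable section ToeplitzAux

lemma toeplitz_single_apply (i j : ℕ) (a : ℂ) :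
    (lp.single (E := fun _ : ℕ => ℂ) 2 i a : ∀ _ : ℕ, ℂ) j = if j = i then a else 0 := by
  rw [lp.single_apply]
  split_ifs with h
  · subst h; simp
  · simp [h]

lemma toeplitz_single_add (i : ℕ) (a b : ℂ) :
    lp.single (E := fun _ : ℕ => ℂ) 2 i (a + b)
      = lp.single (E := fun _ : ℕ => ℂ) 2 i a + lp.single (E := fun _ : ℕ => ℂ) 2 i b := by
  apply lp.ext; funext j
  rw [lp.coeFn_add, Pi.add_apply, toeplitz_single_apply, toeplitz_single_apply,
    toeplitz_single_apply]
  split_ifs <;> simp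

lemma toeplitz_inner_ee (i : ℕ) (f : lp (fun _ : ℕ => ℂ) 2) :
    @inner ℂ _ _ (lp.single (E := fun _ : ℕ => ℂ) 2 i (1 : ℂ)) f = (f : ∀ _ : ℕ, ℂ) i := by
  simp [lp.inner_single_left, RCLike.inner_apply]

end ToeplitzAux

/-- The Toeplitz algebra — the smallest norm-closed star-subalgebra of the bounded
operators on `ℓ²(ℕ, ℂ)` containing the unilateral shift `S` and the identity — contains
every compact operator on `ℓ²(ℕ, ℂ)`. -/
theorem stmt_16 (S : lp (fun _ : ℕ => ℂ) 2 →L[ℂ] lp (fun _ : ℕ => ℂ) 2)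
    (hS0 : ∀ x : lp (fun _ : ℕ => ℂ) 2, (S x : ∀ _ : ℕ, ℂ) 0 = 0)
    (hS : ∀ (x : lp (fun _ : ℕ => ℂ) 2) (n : ℕ),
      (S x : ∀ _ : ℕ, ℂ) (n + 1) = (x : ∀ _ : ℕ, ℂ) n)
    (T : lp (fun _ : ℕ => ℂ) 2 →L[ℂ] lp (fun _ : ℕ => ℂ) 2)
    (hT : IsCompactOperator T) :
    T ∈ (StarAlgebra.adjoin ℂ ({S} : Set (lp (fun _ : ℕ => ℂ) 2 →L[ℂ]
      lp (fun _ : ℕ => ℂ) 2))).topologicalClosure := by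
  classical
  set H := lp (fun _ : ℕ => ℂ) 2
  set A := (StarAlgebra.adjoin ℂ ({S} : Set (H →L[ℂ] H))).topologicalClosure with hA
  set ee : ℕ → H := fun i => lp.single 2 i (1 : ℂ) with hee
  have hSA : S ∈ A :=
    (StarAlgebra.adjoin ℂ {S}).le_topologicalClosure (StarAlgebra.subset_adjoin ℂ _ rfl)
  -- S maps basis vectors to basis vectors
  have hSe : ∀ i, S (ee i) = ee (i + 1) := by
    intro i
    apply lp.ext; funext n
    simp only [hee]
    cases n with
    | zero =>
      rw [hS0, toeplitz_single_apply]
      simp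
    | succ n =>
      rw [hS, toeplitz_single_apply, toeplitz_single_apply]
      by_cases h : n = i <;> simp [h]
  -- the adjoint of S is the left shift
  have hstar : ∀ (x : H) (n : ℕ), ((star S x : H) : ∀ _ : ℕ, ℂ) n = (x : ∀ _ : ℕ, ℂ) (n + 1) := by
    intro x n
    have h1 : ((star S x : H) : ∀ _ : ℕ, ℂ) n
        = @inner ℂ _ _ (lp.single (E := fun _ : ℕ => ℂ) 2 n (1 : ℂ)) (star S x) :=
      (toeplitz_inner_ee n (star S x)).symm
    have h2 : (lp.single (E := fun _ : ℕ => ℂ) 2 n (1 : ℂ) : H) = ee n := by simp only [hee]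
    rw [h1, h2, ContinuousLinearMap.star_eq_adjoint,
      ContinuousLinearMap.adjoint_inner_right, hSe]
    simp only [hee]
    rw [toeplitz_inner_ee]
  -- the rank-one projection
  set P : H →L[ℂ] H := 1 - S * star S with hPdef
  have hP : ∀ x : H, P x = (x : ∀ _ : ℕ, ℂ) 0 • ee 0 := by
    intro x
    apply lp.ext; funext n
    have h1 : ((P x : H) : ∀ _ : ℕ, ℂ) n
        = (x : ∀ _ : ℕ, ℂ) n - ((S (star S x) : H) : ∀ _ : ℕ, ℂ) n := by
      rw [hPdef]
      simp [ContinuousLinearMap.sub_apply, ContinuousLinearMap.mul_apply,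
        ContinuousLinearMap.one_apply, lp.coeFn_sub]
    rw [h1, lp.coeFn_smul, Pi.smul_apply, smul_eq_mul]
    simp only [hee]
    rw [toeplitz_single_apply]
    cases n with
    | zero => rw [hS0]; simp
    | succ n => rw [hS, hstar]; simp
  have hPA : P ∈ A := sub_mem (one_mem A) (mul_mem hSA (star_mem hSA))
  -- powers
  have hstarpow : ∀ (j : ℕ) (x : H) (n : ℕ),
      (((star S) ^ j) x : ∀ _ : ℕ, ℂ) n = (x : ∀ _ : ℕ, ℂ) (n + j) := by
    intro j
    induction j with
    | zero => intro x n; simp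
    | succ j ih =>
      intro x n
      rw [pow_succ, ContinuousLinearMap.mul_apply, ih, hstar, Nat.add_assoc]
  have hSpowe : ∀ i, (S ^ i) (ee 0) = ee i := by
    intro i
    induction i with
    | zero => simp
    | succ i ih => rw [pow_succ', ContinuousLinearMap.mul_apply, ih, hSe]
  -- matrix units
  set Eop : ℕ → ℕ → (H →L[ℂ] H) := fun i j => S ^ i * (P * (star S) ^ j) with hEop
  have hEapp : ∀ (i j : ℕ) (x : H), Eop i j x = (x : ∀ _ : ℕ, ℂ) j • ee i := by
    intro i j x
    rw [hEop]
    simp only [ContinuousLinearMap.mul_apply]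
    rw [hP, map_smul, hSpowe, hstarpow, zero_add]
  have hEA : ∀ i j, Eop i j ∈ A :=
    fun i j => mul_mem (pow_mem hSA i) (mul_mem hPA (pow_mem (star_mem hSA) j))
  -- rank-one operators with range spanned by a basis vector
  set Rop : ℕ → H → (H →L[ℂ] H) :=
    fun i y => (innerSL ℂ y).smulRight (ee i) with hRop
  have hRapp : ∀ (i : ℕ) (y x : H), Rop i y x = (inner ℂ y x : ℂ) • ee i := fun i y x => rfl
  have hRnorm : ∀ (i : ℕ) (y : H), ‖Rop i y‖ ≤ ‖y‖ * ‖ee i‖ := by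
    intro i y
    rw [hRop]
    rw [ContinuousLinearMap.norm_smulRight_apply, innerSL_apply_norm]
  have hRsub : ∀ (i : ℕ) (y z : H), Rop i y - Rop i z = Rop i (y - z) := by
    intro i y z
    refine ContinuousLinearMap.ext fun x => ?_
    simp only [ContinuousLinearMap.sub_apply, hRapp, inner_sub_left, sub_smul]
    rw [inner_sub_left, sub_smul]
  have hclosed : IsClosed (A : Set (H →L[ℂ] H)) :=
    (StarAlgebra.adjoin ℂ ({S} : Set (H →L[ℂ] H))).isClosed_topologicalClosure
  have hRA : ∀ (i : ℕ) (y : H), Rop i y ∈ A := by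
    intro i y
    set s : ℕ → H := fun m => ∑ j ∈ Finset.range m, lp.single 2 j ((y : ∀ _ : ℕ, ℂ) j) with hs
    have hsy : Tendsto s atTop (𝓝 y) :=
      (lp.hasSum_single (by norm_num) y).tendsto_sum_nat
    have hmem : ∀ m, Rop i (s m) ∈ A := by
      intro m
      have : Rop i (s m) = ∑ j ∈ Finset.range m,
          (starRingEnd ℂ ((y : ∀ _ : ℕ, ℂ) j)) • Eop i j := by
        refine ContinuousLinearMap.ext fun x => ?_
        rw [hRapp, ContinuousLinearMap.sum_apply, hs]
        rw [sum_inner]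
        rw [Finset.sum_smul]
        refine Finset.sum_congr rfl fun j _ => ?_
        rw [ContinuousLinearMap.smul_apply, hEapp, smul_smul]
        congr 1
        rw [lp.inner_single_left]
        exact RCLike.inner_apply' _ _
      rw [this]
      exact sum_mem fun j _ => SMulMemClass.smul_mem _ (hEA i j)
    have htend : Tendsto (fun m => Rop i (s m)) atTop (𝓝 (Rop i y)) := by
      rw [tendsto_iff_norm_sub_tendsto_zero]
      have hb : ∀ m, ‖Rop i (s m) - Rop i y‖ ≤ ‖s m - y‖ * ‖ee i‖ := by
        intro m
        rw [hRsub]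
        exact hRnorm i _
      have h0 : Tendsto (fun m => ‖s m - y‖ * ‖ee i‖) atTop (𝓝 0) := by
        have := (tendsto_iff_norm_sub_tendsto_zero.mp hsy).mul_const ‖ee i‖
        rwa [zero_mul] at this
      exact squeeze_zero (fun m => norm_nonneg _) hb h0
    exact hclosed.mem_of_tendsto htend (Filter.Eventually.of_forall hmem)
  -- the approximating finite-rank operators
  set Tadj := ContinuousLinearMap.adjoint T with hTadj
  set F : ℕ → (H →L[ℂ] H) := fun n => ∑ i ∈ Finset.range n, Rop i (Tadj (ee i)) with hF
  have hFA : ∀ n, F n ∈ A := fun n => sum_mem fun i _ => hRA i _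
  have hFapp : ∀ (n : ℕ) (x : H),
      F n x = ∑ i ∈ Finset.range n, lp.single 2 i (((T x : H) : ∀ _ : ℕ, ℂ) i) := by
    intro n x
    rw [hF]
    rw [ContinuousLinearMap.sum_apply]
    refine Finset.sum_congr rfl fun i _ => ?_
    rw [hRapp, hTadj, ContinuousLinearMap.adjoint_inner_left]
    simp only [hee]
    rw [toeplitz_inner_ee, ← lp.single_smul]
    norm_num
  -- the quantitative truncation estimates
  have htoReal : ((2 : ℝ≥0∞)).toReal = (2 : ℝ) := by norm_num
  have htrunc_le : ∀ (n : ℕ) (z : H),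
      ‖(∑ i ∈ Finset.range n, lp.single 2 i ((z : ∀ _ : ℕ, ℂ) i)) - z‖ ≤ ‖z‖ := by
    intro n z
    have h := lp.norm_compl_sum_single (p := 2) (E := fun _ : ℕ => ℂ)
      (by rw [htoReal]; norm_num) z (Finset.range n)
    rw [htoReal] at h
    have h2 : (0:ℝ) ≤ ∑ i ∈ Finset.range n, ‖(z : ∀ _ : ℕ, ℂ) i‖ ^ (2:ℝ) := by positivity
    have h3 : ‖z - ∑ i ∈ Finset.range n, lp.single 2 i ((z : ∀ _ : ℕ, ℂ) i)‖ ^ (2:ℝ)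
        ≤ ‖z‖ ^ (2:ℝ) := by rw [h]; linarith
    rw [show (2:ℝ) = ((2:ℕ):ℝ) by norm_num, Real.rpow_natCast, Real.rpow_natCast] at h3
    rw [← norm_sub_rev]
    exact (pow_le_pow_iff_left₀ (norm_nonneg _) (norm_nonneg _) (by norm_num)).mp h3
  have htrunc_tendsto : ∀ z : H,
      Tendsto (fun n => ‖(∑ i ∈ Finset.range n, lp.single 2 i ((z : ∀ _ : ℕ, ℂ) i)) - z‖)
        atTop (𝓝 0) := by
    intro z
    have := (lp.hasSum_single (E := fun _ : ℕ => ℂ) (p := 2) (by norm_num) z).tendsto_sum_nat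
    exact tendsto_iff_norm_sub_tendsto_zero.mp this
  -- compactness: a totally bounded image
  obtain ⟨K, hK, hTK⟩ :=
    hT.image_closedBall_subset_compact (𝕜₁ := ℂ) (f := (T : H →ₗ[ℂ] H)) 1
  -- main convergence
  have hFT : Tendsto F atTop (𝓝 T) := by
    rw [Metric.tendsto_atTop]
    intro ε hε
    obtain ⟨t, htfin, htcover⟩ := (Metric.totallyBounded_iff.mp hK.totallyBounded) (ε / 4) (by linarith)
    -- eventually all net points are well approximated
    have hev : ∀ᶠ n in atTop, ∀ k ∈ t,
        ‖(∑ i ∈ Finset.range n, lp.single 2 i ((k : ∀ _ : ℕ, ℂ) i)) - k‖ < ε / 4 := by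
      rw [Filter.eventually_all_finite htfin]
      intro k _
      exact (htrunc_tendsto k).eventually (Filter.Tendsto.eventually_lt_const (by linarith) tendsto_id)
    rw [Filter.eventually_atTop] at hev
    obtain ⟨N, hN⟩ := hev
    refine ⟨N, fun n hn => ?_⟩
    rw [dist_eq_norm]
    have hop : ‖F n - T‖ ≤ 3 * ε / 4 := by
      refine ContinuousLinearMap.opNorm_le_bound _ (by linarith) fun x => ?_
      rcases eq_or_ne x 0 with rfl | hx
      · simp
      · have hxpos : (0:ℝ) < ‖x‖ := norm_pos_iff.mpr hx
        set u : H := (‖x‖ : ℂ)⁻¹ • x with hu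
        have hunorm : ‖u‖ = 1 := by
          rw [hu, norm_smul]
          simp [norm_inv, hxpos.ne']
        have hTu : T u ∈ K := hTK ⟨u, by simp [Metric.mem_closedBall, hunorm], rfl⟩
        obtain ⟨k, hkt, hkball⟩ := Set.mem_iUnion₂.mp (htcover hTu)
        have hxu : x = (‖x‖ : ℂ) • u := by
          rw [hu, smul_smul, mul_inv_cancel₀ (by exact_mod_cast hxpos.ne'), one_smul]
        have key : ∀ w : H, (F n - T) w
            = (∑ i ∈ Finset.range n, lp.single 2 i (((T w : H) : ∀ _ : ℕ, ℂ) i)) - T w := by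
          intro w
          rw [ContinuousLinearMap.sub_apply, hFapp]
        have hbu : ‖(F n - T) u‖ ≤ 3 * ε / 4 := by
          rw [key]
          have h1 : ‖(∑ i ∈ Finset.range n, lp.single 2 i (((T u : H) : ∀ _ : ℕ, ℂ) i)) - T u‖
              ≤ ‖(∑ i ∈ Finset.range n, lp.single 2 i ((((T u : H) - k : H) : ∀ _ : ℕ, ℂ) i))
                  - ((T u : H) - k)‖
                + ‖(∑ i ∈ Finset.range n, lp.single 2 i ((k : ∀ _ : ℕ, ℂ) i)) - k‖ := by
            have hsplit : (∑ i ∈ Finset.range n, lp.single 2 i (((T u : H) : ∀ _ : ℕ, ℂ) i)) - T u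
                = ((∑ i ∈ Finset.range n, lp.single 2 i ((((T u : H) - k : H) : ∀ _ : ℕ, ℂ) i))
                    - ((T u : H) - k))
                  + ((∑ i ∈ Finset.range n, lp.single 2 i ((k : ∀ _ : ℕ, ℂ) i)) - k) := by
              have : ∀ i, lp.single (E := fun _ : ℕ => ℂ) 2 i (((T u : H) : ∀ _ : ℕ, ℂ) i)
                  = lp.single (E := fun _ : ℕ => ℂ) 2 i ((((T u : H) - k : H) : ∀ _ : ℕ, ℂ) i)
                    + lp.single (E := fun _ : ℕ => ℂ) 2 i ((k : ∀ _ : ℕ, ℂ) i) := by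
                intro i
                have hcoord : ((T u : H) : ∀ _ : ℕ, ℂ) i
                    = (((T u : H) - k : H) : ∀ _ : ℕ, ℂ) i + (k : ∀ _ : ℕ, ℂ) i := by
                  rw [lp.coeFn_sub, Pi.sub_apply]; ring
                rw [hcoord, toeplitz_single_add]
              rw [Finset.sum_congr rfl fun i _ => this i, Finset.sum_add_distrib]
              abel
            rw [hsplit]
            exact norm_add_le _ _
          have h2 : ‖(∑ i ∈ Finset.range n, lp.single 2 i ((((T u : H) - k : H) : ∀ _ : ℕ, ℂ) i))
              - ((T u : H) - k)‖ ≤ ‖(T u : H) - k‖ := htrunc_le n _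
          have h3 : ‖(T u : H) - k‖ < ε / 4 := by
            rw [← dist_eq_norm]
            exact Metric.mem_ball.mp hkball
          have h4 := hN n hn k hkt
          linarith
        have hFx : (F n - T) x = (‖x‖ : ℂ) • (F n - T) u := by
          conv_lhs => rw [hxu, map_smul]
        rw [hFx, norm_smul, Complex.norm_real, norm_norm, mul_comm]
        exact mul_le_mul_of_nonneg_right hbu (norm_nonneg x)
    calc ‖F n - T‖ ≤ 3 * ε / 4 := hop
    _ < ε := by linarith
  exact hclosed.mem_of_tendsto hFT (Filter.Eventually.of_forall hFA)
end
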